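/- Let n ≥ 2, let J = [r, s] ⊆ {1,…,n−1} be an interval, and let k ∈ J. Then the cardinality of the collection S_{J,k,□} equals (2ns − r(r+1) − s(s−1) + 2)/2. In particular this number does not depend on k, and for J = {k} one gets |S_{k,□}| = k(n−k) + 1. -/
import Mathlib


/-- An interval subset of `[n] = {1,…,n}`, i.e. one of the form `{a, a+1, …, b}`. -/
def IsIntervalSet (n : ℕ) (I : Finset ℕ) : Prop :=
  I ⊆ Finset.Icc 1 n ∧ ∃ a b : ℕ, I = Finset.Icc a b

/-- A cointerval subset of `[n]`: its complement in `[n]` is an interval. -/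
def IsCointervalSet (n : ℕ) (I : Finset ℕ) : Prop :=
  I ⊆ Finset.Icc 1 n ∧ ∃ a b : ℕ, Finset.Icc 1 n \ I = Finset.Icc a b

/-- The rectangle collection `S_{k,□}`: all interval `k`-subsets of `[n]` together with
all `k`-subsets of `[n]` that contain `1` and are a disjoint union of two intervals. -/
def Srect (n k : ℕ) : Set (Finset ℕ) :=
  {I | I ⊆ Finset.Icc 1 n ∧ I.card = k ∧
    ((∃ a b : ℕ, I = Finset.Icc a b) ∨
     (1 ∈ I ∧ ∃ A B : Finset ℕ, (∃ a b : ℕ, A = Finset.Icc a b) ∧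
        (∃ c d : ℕ, B = Finset.Icc c d) ∧ Disjoint A B ∧ I = A ∪ B))}

/-- The extended rectangle collection `S_{J,k,□}`: `S_{k,□}` together with all interval
`t`-subsets for `t ∈ J`, `t > k`, and all cointerval `t`-subsets for `t ∈ J`, `t < k`. -/
def SJrect (n : ℕ) (J : Finset ℕ) (k : ℕ) : Set (Finset ℕ) :=
  Srect n k ∪ {I | IsIntervalSet n I ∧ I.card ∈ J ∧ k < I.card}
    ∪ {I | IsCointervalSet n I ∧ I.card ∈ J ∧ I.card < k}


open Finset

/-- parametrization of two-interval rectangle sets -/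
def grect (k : ℕ) (p : ℕ × ℕ) : Finset ℕ :=
  Finset.Icc 1 p.1 ∪ Finset.Icc (p.1 + p.2 + 2) (p.2 + k + 1)

lemma mem_grect (k i m x : ℕ) :
    x ∈ grect k (i, m) ↔ (1 ≤ x ∧ x ≤ i) ∨ (i + m + 2 ≤ x ∧ x ≤ m + k + 1) := by
  simp [grect, Finset.mem_union, Finset.mem_Icc]

def rectSet (n k : ℕ) : Finset (Finset ℕ) :=
  insert (Finset.Icc 1 k)
    (((Finset.range k) ×ˢ (Finset.range (n - k))).image (grect k))

lemma grect_card (k i m : ℕ) (hi : i < k) : (grect k (i, m)).card = k := by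
  have hd : Disjoint (Finset.Icc 1 i) (Finset.Icc (i + m + 2) (m + k + 1)) := by
    rw [Finset.disjoint_left]
    intro x hx hx'
    simp [Finset.mem_Icc] at hx hx'
    omega
  rw [grect, Finset.card_union_of_disjoint hd, Nat.card_Icc, Nat.card_Icc]
  omega

lemma grect_inj (k i m i' m' : ℕ) (hi : i < k) (hi' : i' < k)
    (h : grect k (i, m) = grect k (i', m')) : i = i' ∧ m = m' := by
  have H := Finset.ext_iff.mp h
  have h1 := H (i + 1); have h2 := H (i' + 1)
  have h3 := H (i + m + 2); have h4 := H (i' + m' + 2)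
  simp only [mem_grect] at h1 h2 h3 h4
  omega

lemma grect_ne_Icc (n k i m : ℕ) (hi : i < k) : grect k (i, m) ≠ Finset.Icc 1 k := by
  intro h
  have H := Finset.ext_iff.mp h (i + 1)
  simp only [mem_grect, Finset.mem_Icc] at H
  omega

lemma rectSet_card (n k : ℕ) : (rectSet n k).card = k * (n - k) + 1 := by
  rw [rectSet, Finset.card_insert_of_notMem, Finset.card_image_of_injOn]
  · rw [Finset.card_product, Finset.card_range, Finset.card_range]
  · intro p hp q hq h
    simp only [Finset.coe_product, Set.mem_prod, Finset.mem_coe, Finset.mem_range] at hp hq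
    obtain ⟨h1, h2⟩ := grect_inj k p.1 p.2 q.1 q.2 hp.1 hq.1 (by
      obtain ⟨a, b⟩ := p; obtain ⟨c, d⟩ := q; exact h)
    exact Prod.ext h1 h2
  · intro h
    obtain ⟨p, hp, hpe⟩ := Finset.mem_image.mp h
    simp only [Finset.mem_product, Finset.mem_range] at hp
    exact grect_ne_Icc n k p.1 p.2 hp.1 (by obtain ⟨a, b⟩ := p; exact hpe)

/-- helper: an interval k-subset is in rectSet -/
lemma interval_mem_rectSet (n k a b : ℕ) (hk1 : 1 ≤ k)
    (hsub : Finset.Icc a b ⊆ Finset.Icc 1 n) (hcard : (Finset.Icc a b).card = k) :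
    Finset.Icc a b ∈ rectSet n k := by
  rw [Nat.card_Icc] at hcard
  have hab : a ≤ b := by omega
  have ha1 : 1 ≤ a := by
    have := hsub (Finset.mem_Icc.mpr ⟨le_refl a, hab⟩); simp [Finset.mem_Icc] at this; omega
  have hbn : b ≤ n := by
    have := hsub (Finset.mem_Icc.mpr ⟨hab, le_refl b⟩); simp [Finset.mem_Icc] at this; omega
  rcases eq_or_lt_of_le ha1 with h1 | h2
  · -- a = 1, interval is Icc 1 k
    rw [rectSet, Finset.mem_insert]
    left
    have : b = k := by omega
    rw [← h1, this]
  · -- a ≥ 2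
    rw [rectSet, Finset.mem_insert]
    right
    refine Finset.mem_image.mpr ⟨(0, a - 2), ?_, ?_⟩
    · simp only [Finset.mem_product, Finset.mem_range]
      constructor <;> omega
    · ext x
      rw [mem_grect, Finset.mem_Icc]
      omega

/-- helper: union of prefix interval and another disjoint interval is in rectSet -/
lemma union_mem_rectSet (n k b c d : ℕ) (hk1 : 1 ≤ k) (hb : 1 ≤ b)
    (hsub : Finset.Icc 1 b ∪ Finset.Icc c d ⊆ Finset.Icc 1 n)
    (hcard : (Finset.Icc 1 b ∪ Finset.Icc c d).card = k)
    (hdisj : Disjoint (Finset.Icc 1 b) (Finset.Icc c d)) :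
    Finset.Icc 1 b ∪ Finset.Icc c d ∈ rectSet n k := by
  by_cases hcd : c ≤ d
  · -- second interval nonempty
    have hc1 : 1 ≤ c := by
      have := hsub (Finset.mem_union_right _ (Finset.mem_Icc.mpr ⟨le_refl c, hcd⟩))
      simp [Finset.mem_Icc] at this; omega
    have hdn : d ≤ n := by
      have := hsub (Finset.mem_union_right _ (Finset.mem_Icc.mpr ⟨hcd, le_refl d⟩))
      simp [Finset.mem_Icc] at this; omega
    have hbc : b < c := by
      by_contra hcon
      exact (Finset.disjoint_left.mp hdisj
        (Finset.mem_Icc.mpr ⟨hc1, by omega⟩) (Finset.mem_Icc.mpr ⟨le_refl c, hcd⟩))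
    have hcard' : b + (d + 1 - c) = k := by
      rw [Finset.card_union_of_disjoint hdisj, Nat.card_Icc, Nat.card_Icc] at hcard
      omega
    by_cases hc : c = b + 1
    ·
      have hI : Finset.Icc 1 b ∪ Finset.Icc c d = Finset.Icc 1 d := by
        ext x; simp only [Finset.mem_union, Finset.mem_Icc]; omega
      rw [hI]
      have : d = k := by omega
      rw [this, rectSet]
      exact Finset.mem_insert_self _ _
    · -- genuine gap
      rw [rectSet, Finset.mem_insert]
      right
      refine Finset.mem_image.mpr ⟨(b, c - b - 2), ?_, ?_⟩
      · simp only [Finset.mem_product, Finset.mem_range]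
        constructor <;> omega
      · ext x
        rw [mem_grect, Finset.mem_union, Finset.mem_Icc, Finset.mem_Icc]
        omega
  · -- second interval empty
    rw [Finset.Icc_eq_empty hcd, Finset.union_empty] at hcard ⊢
    rw [Nat.card_Icc] at hcard
    have : b = k := by omega
    rw [this, rectSet]
    exact Finset.mem_insert_self _ _

lemma srect_eq (n k : ℕ) (hk1 : 1 ≤ k) (hkn : k < n) :
    Srect n k = ↑(rectSet n k) := by
  ext I
  simp only [Srect, Set.mem_setOf_eq, Finset.mem_coe]
  constructor
  · rintro ⟨hsub, hcard, hcase⟩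
    rcases hcase with ⟨a, b, rfl⟩ | ⟨h1, A, B, ⟨a, b, rfl⟩, ⟨c, d, rfl⟩, hdisj, hI⟩
    · exact interval_mem_rectSet n k a b hk1 hsub hcard
    · subst hI
      rcases Finset.mem_union.mp h1 with hA | hB
      · have ha1 : a = 1 := by
          have h1ab := Finset.mem_Icc.mp hA
          have : a ∈ Finset.Icc 1 n := hsub (Finset.mem_union_left _
            (Finset.mem_Icc.mpr ⟨le_refl a, by omega⟩))
          simp [Finset.mem_Icc] at this; omega
        subst ha1
        exact union_mem_rectSet n k b c d hk1 (Finset.mem_Icc.mp hA).2 hsub hcard hdisj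
      · have hc1 : c = 1 := by
          have h1cd := Finset.mem_Icc.mp hB
          have : c ∈ Finset.Icc 1 n := hsub (Finset.mem_union_right _
            (Finset.mem_Icc.mpr ⟨le_refl c, by omega⟩))
          simp [Finset.mem_Icc] at this; omega
        subst hc1
        rw [Finset.union_comm] at hsub hcard ⊢
        exact union_mem_rectSet n k d a b hk1 (Finset.mem_Icc.mp hB).2 hsub hcard
          hdisj.symm
  · intro h
    rw [rectSet, Finset.mem_insert] at h
    rcases h with rfl | h
    · refine ⟨Finset.Icc_subset_Icc le_rfl (by omega), by rw [Nat.card_Icc]; omega,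
        Or.inl ⟨1, k, rfl⟩⟩
    · obtain ⟨⟨i, m⟩, hp, rfl⟩ := Finset.mem_image.mp h
      simp only [Finset.mem_product, Finset.mem_range] at hp
      obtain ⟨hik, hmn⟩ := hp
      refine ⟨?_, grect_card k i m hik, ?_⟩
      · intro x hx
        rw [mem_grect] at hx
        simp only [Finset.mem_Icc]
        omega
      · by_cases hi0 : i = 0
        · subst hi0
          left
          refine ⟨m + 2, m + k + 1, ?_⟩
          ext x; rw [mem_grect, Finset.mem_Icc]; omega
        · right
          refine ⟨by rw [mem_grect]; omega,
            Finset.Icc 1 i, Finset.Icc (i + m + 2) (m + k + 1),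
            ⟨1, i, rfl⟩, ⟨i + m + 2, m + k + 1, rfl⟩, ?_, rfl⟩
          rw [Finset.disjoint_left]
          intro x hx hx'
          simp [Finset.mem_Icc] at hx hx'
          omega

def intvSet (n k s : ℕ) : Finset (Finset ℕ) :=
  ((Finset.Icc (k + 1) s).sigma (fun t => Finset.Icc 1 (n + 1 - t))).image
    (fun p => Finset.Icc p.2 (p.2 + p.1 - 1))

def cointvSet (n k r : ℕ) : Finset (Finset ℕ) :=
  ((Finset.Icc r (k - 1)).sigma (fun t => Finset.Icc 1 (t + 1))).image
    (fun p => Finset.Icc 1 n \ Finset.Icc p.2 (p.2 + (n - p.1) - 1))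

lemma intv_eq (n r s k : ℕ) (hn : 1 ≤ n) (hs : s ≤ n - 1) (hrk : r ≤ k) :
    {I | IsIntervalSet n I ∧ I.card ∈ Finset.Icc r s ∧ k < I.card} = ↑(intvSet n k s) := by
  ext I
  simp only [Set.mem_setOf_eq, Finset.mem_coe, intvSet, Finset.mem_image]
  constructor
  · rintro ⟨⟨hsub, a, b, rfl⟩, hmem, hk⟩
    rw [Nat.card_Icc] at hmem hk
    simp only [Finset.mem_Icc] at hmem
    have hab : a ≤ b := by omega
    have ha1 : 1 ≤ a := by
      have := hsub (Finset.mem_Icc.mpr ⟨le_refl a, hab⟩); simp [Finset.mem_Icc] at this; omega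
    have hbn : b ≤ n := by
      have := hsub (Finset.mem_Icc.mpr ⟨hab, le_refl b⟩); simp [Finset.mem_Icc] at this; omega
    refine ⟨⟨b + 1 - a, a⟩, ?_, ?_⟩
    · simp only [Finset.mem_sigma, Finset.mem_Icc]
      refine ⟨⟨by omega, by omega⟩, by omega, by omega⟩
    · simp only
      congr 1
      omega
  · rintro ⟨⟨t, a⟩, hp, rfl⟩
    simp only [Finset.mem_sigma, Finset.mem_Icc] at hp
    obtain ⟨⟨htk, hts⟩, ha1, han⟩ := hp
    have hcard : (Finset.Icc a (a + t - 1)).card = t := by rw [Nat.card_Icc]; omega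
    refine ⟨⟨?_, a, a + t - 1, rfl⟩, ?_, ?_⟩
    · intro x hx
      simp only [Finset.mem_Icc] at hx ⊢
      omega
    · rw [hcard]; simp only [Finset.mem_Icc]; omega
    · rw [hcard]; omega

lemma intvSet_card (n k s : ℕ) (hn : 1 ≤ n) (hs : s ≤ n - 1) :
    (intvSet n k s).card = ∑ t ∈ Finset.Icc (k + 1) s, (n + 1 - t) := by
  rw [intvSet, Finset.card_image_of_injOn]
  · rw [Finset.card_sigma]
    refine Finset.sum_congr rfl fun t _ => ?_
    rw [Nat.card_Icc]; omega
  · rintro ⟨t, a⟩ hp ⟨t', a'⟩ hq h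
    simp only [Finset.coe_sigma, Set.mem_sigma_iff, Finset.mem_coe, Finset.mem_Icc] at hp hq
    simp only at h
    have H := Finset.ext_iff.mp h
    have h1 := H a; have h2 := H a'
    have h3 := H (a + t - 1); have h4 := H (a' + t' - 1)
    simp only [Finset.mem_Icc] at h1 h2 h3 h4
    have : t = t' ∧ a = a' := by omega
    simp [this.1, this.2]

lemma coint_eq (n r s k : ℕ) (hn : 2 ≤ n) (hs : s ≤ n - 1) (hks : k ≤ s) (hr : 1 ≤ r) :
    {I | IsCointervalSet n I ∧ I.card ∈ Finset.Icc r s ∧ I.card < k} = ↑(cointvSet n k r) := by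
  ext I
  simp only [Set.mem_setOf_eq, Finset.mem_coe, cointvSet, Finset.mem_image]
  constructor
  · rintro ⟨⟨hsub, a, b, hab⟩, hmem, hk⟩
    simp only [Finset.mem_Icc] at hmem
    have hcI : (Finset.Icc 1 n \ I).card = n - I.card := by
      rw [Finset.card_sdiff_of_subset hsub, Nat.card_Icc]; omega
    rw [hab, Nat.card_Icc] at hcI
    have hIcard : I.card < n := by omega
    have hab' : a ≤ b := by omega
    have hsub2 : Finset.Icc a b ⊆ Finset.Icc 1 n := by
      rw [← hab]; exact Finset.sdiff_subset
    have ha1 : 1 ≤ a := by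
      have := hsub2 (Finset.mem_Icc.mpr ⟨le_refl a, hab'⟩); simp [Finset.mem_Icc] at this; omega
    have hbn : b ≤ n := by
      have := hsub2 (Finset.mem_Icc.mpr ⟨hab', le_refl b⟩); simp [Finset.mem_Icc] at this; omega
    refine ⟨⟨I.card, a⟩, ?_, ?_⟩
    · simp only [Finset.mem_sigma, Finset.mem_Icc]
      refine ⟨⟨by omega, by omega⟩, by omega, by omega⟩
    · simp only
      have hb : a + (n - I.card) - 1 = b := by omega
      rw [hb, ← hab, Finset.sdiff_sdiff_eq_self hsub]
  · rintro ⟨⟨t, a⟩, hp, rfl⟩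
    simp only [Finset.mem_sigma, Finset.mem_Icc] at hp
    obtain ⟨⟨hrt, htk⟩, ha1, hat⟩ := hp
    have hk1 : 1 ≤ k := by omega
    have htn : t + 2 ≤ n := by omega
    have hsub2 : Finset.Icc a (a + (n - t) - 1) ⊆ Finset.Icc 1 n := by
      intro x hx; simp only [Finset.mem_Icc] at hx ⊢; omega
    have hcard : (Finset.Icc 1 n \ Finset.Icc a (a + (n - t) - 1)).card = t := by
      rw [Finset.card_sdiff_of_subset hsub2, Nat.card_Icc, Nat.card_Icc]; omega
    refine ⟨⟨Finset.sdiff_subset, a, a + (n - t) - 1,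
      Finset.sdiff_sdiff_eq_self hsub2⟩, ?_, ?_⟩
    · rw [hcard]; simp only [Finset.mem_Icc]; omega
    · rw [hcard]; omega

lemma cointvSet_card (n k r : ℕ) (hn : 2 ≤ n) (hk : k ≤ n - 1) :
    (cointvSet n k r).card = ∑ t ∈ Finset.Icc r (k - 1), (t + 1) := by
  rw [cointvSet, Finset.card_image_of_injOn]
  · rw [Finset.card_sigma]
    refine Finset.sum_congr rfl fun t _ => ?_
    rw [Nat.card_Icc]; omega
  · rintro ⟨t, a⟩ hp ⟨t', a'⟩ hq h
    simp only [Finset.coe_sigma, Set.mem_sigma_iff, Finset.mem_coe, Finset.mem_Icc] at hp hq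
    simp only at h
    have hsub2 : Finset.Icc a (a + (n - t) - 1) ⊆ Finset.Icc 1 n := by
      intro x hx; simp only [Finset.mem_Icc] at hx ⊢; omega
    have hsub2' : Finset.Icc a' (a' + (n - t') - 1) ⊆ Finset.Icc 1 n := by
      intro x hx; simp only [Finset.mem_Icc] at hx ⊢; omega
    have h2 : Finset.Icc a (a + (n - t) - 1) = Finset.Icc a' (a' + (n - t') - 1) := by
      have := congrArg (fun S => Finset.Icc 1 n \ S) h
      simpa [Finset.sdiff_sdiff_eq_self hsub2, Finset.sdiff_sdiff_eq_self hsub2'] using this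
    have H := Finset.ext_iff.mp h2
    have h1 := H a; have h2' := H a'
    have h3 := H (a + (n - t) - 1); have h4 := H (a' + (n - t') - 1)
    simp only [Finset.mem_Icc] at h1 h2' h3 h4
    have : t = t' ∧ a = a' := by omega
    simp [this.1, this.2]

lemma two_sum_Icc (a : ℕ) : ∀ b : ℕ, a ≤ b + 1 →
    2 * (∑ t ∈ Finset.Icc a b, (t : ℤ)) = (b : ℤ) * ((b : ℤ) + 1) - (a : ℤ) * ((a : ℤ) - 1)
  | 0, h => by
    interval_cases a <;> simp
  | (b + 1), h => by
    rcases Nat.lt_or_ge b (a) with hb | hb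
    · have hab : a = b + 1 ∨ a = b + 2 := by omega
      rcases hab with rfl | rfl
      · rw [Finset.Icc_self, Finset.sum_singleton]; push_cast; ring
      · rw [Finset.Icc_eq_empty (by omega)]; push_cast; ring
    · rw [Finset.sum_Icc_succ_top (by omega : a ≤ b + 1)]
      have ih := two_sum_Icc a b (by omega)
      push_cast
      push_cast at ih
      linarith
/-- **Cardinality of the extended rectangle collection.**
For an interval `J = [r,s] ⊆ {1,…,n−1}` and `k ∈ J`,
`|S_{J,k,□}| = (2ns − r(r+1) − s(s−1) + 2)/2`; in particular this does not depend on
`k`, and `|S_{k,□}| = k(n−k) + 1`. -/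
theorem card_extended_rectangle_collection
    (n r s k : ℕ) (hn : 2 ≤ n)
    (hr : 1 ≤ r) (hrs : r ≤ s) (hs : s ≤ n - 1)
    (hrk : r ≤ k) (hks : k ≤ s) :
    2 * ((SJrect n (Finset.Icc r s) k).ncard : ℤ) =
      2 * (n : ℤ) * (s : ℤ) - (r : ℤ) * ((r : ℤ) + 1) - (s : ℤ) * ((s : ℤ) - 1) + 2 ∧
    (Srect n k).ncard = k * (n - k) + 1 := by
  have hk1 : 1 ≤ k := le_trans hr hrk
  have hkn : k < n := by omega
  have hse : Srect n k = ↑(rectSet n k) := srect_eq n k hk1 hkn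
  have hsrect : (Srect n k).ncard = k * (n - k) + 1 := by
    rw [hse, Set.ncard_coe_finset, rectSet_card]
  refine ⟨?_, hsrect⟩
  -- identify SJrect with a finset union
  have hie := intv_eq n r s k (by omega) hs hrk
  have hce := coint_eq n r s k hn hs hks hr
  have hU : SJrect n (Finset.Icc r s) k =
      ↑(rectSet n k ∪ intvSet n k s ∪ cointvSet n k r) := by
    rw [SJrect, hse, hie, hce, ← Finset.coe_union, ← Finset.coe_union]
  -- disjointness
  have hd1 : Disjoint (rectSet n k) (intvSet n k s) := by
    rw [Finset.disjoint_left]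
    intro I h1 h2
    have hIk : I.card = k := by
      have : I ∈ Srect n k := by rw [hse]; exact h1
      exact this.2.1
    have h3 : I ∈ {I | IsIntervalSet n I ∧ I.card ∈ Finset.Icc r s ∧ k < I.card} := by
      rw [hie]; exact h2
    have := h3.2.2
    omega
  have hd2 : Disjoint (rectSet n k ∪ intvSet n k s) (cointvSet n k r) := by
    rw [Finset.disjoint_left]
    intro I h1 h2
    have hlt : I.card < k := by
      have : I ∈ {I | IsCointervalSet n I ∧ I.card ∈ Finset.Icc r s ∧ I.card < k} := by
        rw [hce]; exact h2
      exact this.2.2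
    rcases Finset.mem_union.mp h1 with h1 | h1
    · have h4 : I ∈ Srect n k := by rw [hse]; exact h1
      have := h4.2.1
      omega
    · have h4 : I ∈ {I | IsIntervalSet n I ∧ I.card ∈ Finset.Icc r s ∧ k < I.card} := by
        rw [hie]; exact h1
      have := h4.2.2
      omega
  -- total cardinality
  have hcard : (SJrect n (Finset.Icc r s) k).ncard =
      (k * (n - k) + 1) + (∑ t ∈ Finset.Icc (k + 1) s, (n + 1 - t))
        + (∑ t ∈ Finset.Icc r (k - 1), (t + 1)) := by
    rw [hU, Set.ncard_coe_finset, Finset.card_union_of_disjoint hd2,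
      Finset.card_union_of_disjoint hd1, rectSet_card, intvSet_card n k s (by omega) hs,
      cointvSet_card n k r hn (by omega)]
  rw [hcard]
  -- now integer arithmetic
  have e1 : 2 * ((∑ t ∈ Finset.Icc (k + 1) s, (n + 1 - t) : ℕ) : ℤ) =
      2 * ((n : ℤ) + 1) * ((s : ℤ) - (k : ℤ)) -
        ((s : ℤ) * ((s : ℤ) + 1) - ((k : ℤ) + 1) * (k : ℤ)) := by
    have hc : ((∑ t ∈ Finset.Icc (k + 1) s, (n + 1 - t) : ℕ) : ℤ) =
        ∑ t ∈ Finset.Icc (k + 1) s, ((n : ℤ) + 1 - (t : ℤ)) := by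
      rw [Nat.cast_sum]
      refine Finset.sum_congr rfl fun t ht => ?_
      simp only [Finset.mem_Icc] at ht
      have : t ≤ n + 1 := by omega
      push_cast [Nat.cast_sub this]
      ring
    rw [hc, Finset.sum_sub_distrib, Finset.sum_const, Nat.card_Icc, nsmul_eq_mul]
    have hsum := two_sum_Icc (k + 1) s (by omega)
    have hcast : ((s + 1 - (k + 1) : ℕ) : ℤ) = (s : ℤ) - (k : ℤ) := by omega
    rw [hcast]
    push_cast at hsum
    linarith
  have e2 : 2 * ((∑ t ∈ Finset.Icc r (k - 1), (t + 1) : ℕ) : ℤ) =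
      ((k : ℤ) - 1) * (k : ℤ) - (r : ℤ) * ((r : ℤ) - 1) + 2 * ((k : ℤ) - (r : ℤ)) := by
    have hc : ((∑ t ∈ Finset.Icc r (k - 1), (t + 1) : ℕ) : ℤ) =
        (∑ t ∈ Finset.Icc r (k - 1), (t : ℤ)) + ((k : ℤ) - (r : ℤ)) := by
      rw [Nat.cast_sum]
      have h1 : ∑ t ∈ Finset.Icc r (k - 1), ((t + 1 : ℕ) : ℤ) =
          ∑ t ∈ Finset.Icc r (k - 1), ((t : ℤ) + 1) := by
        push_cast; rfl
      rw [h1, Finset.sum_add_distrib, Finset.sum_const, Nat.card_Icc, nsmul_eq_mul]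
      have hcast : ((k - 1 + 1 - r : ℕ) : ℤ) = (k : ℤ) - (r : ℤ) := by omega
      rw [hcast]; ring
    rw [hc]
    have hsum := two_sum_Icc r (k - 1) (by omega)
    have hcast : ((k - 1 : ℕ) : ℤ) = (k : ℤ) - 1 := by omega
    rw [hcast] at hsum
    linarith
  have e0 : ((k * (n - k) + 1 : ℕ) : ℤ) = (k : ℤ) * ((n : ℤ) - (k : ℤ)) + 1 := by
    push_cast [Nat.cast_sub (le_of_lt hkn)]; ring
  rw [Nat.cast_add, Nat.cast_add, e0]
  linear_combination e1 + e2
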